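/- Let 𝒲 be a piecewise surjective and increasing W-transform with change points 0 = δ_0 < δ_1 < ⋯ < δ_K = 1, let G_k(u) = (𝒲_{|k}^{−1}(u) − δ_{k−1})/(δ_k − δ_{k−1}) for u ∈ (0,1) (with G_k(0) = 0, G_k(1) = 1), and let g_k = G_k′ denote its derivative, assumed to exist almost everywhere with one-sided limits g_k(0+) and g_k(1−). Let C_1,…,C_K be bivariate copulas with existing lower and upper tail dependence coefficients λ_{l,k} and λ_{u,k}, and let C_{S,𝒲}(u_1, u_2) = Σ_{k=1}^K (δ_k − δ_{k−1}) C_k(G_k(u_1), G_k(u_2)) be the homogeneous W-transformed ordinal sum. Then the lower and upper tail dependence coefficients of C_{S,𝒲} are λ_l = Σ_{k=1}^K α_k λ_{l,k} and λ_u = Σ_{k=1}^K β_k λ_{u,k}, where α_k = (δ_k − δ_{k−1}) g_k(0+) ≥ 0, β_k = (δ_k − δ_{k−1}) g_k(1−) ≥ 0, and Σ_{k=1}^K α_k = Σ_{k=1}^K β_k = 1. -/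

import Mathlib

open MeasureTheory Set Filter

/-- The uniform distribution `U(0,1)`. -/
noncomputable def unif01 : Measure ℝ := volume.restrict (Set.Ioc (0 : ℝ) 1)

/-- The local inverse of an increasing piece of `W` on `(a, b]`,
`inf {u ∈ (a,b] : W u ≥ v}`, with the convention `inf ∅ = b`. -/
noncomputable def locInvI (W : ℝ → ℝ) (a b v : ℝ) : ℝ :=
  sInf ({u | u ∈ Set.Ioc a b ∧ v ≤ W u} ∪ {b})

/-- A bivariate copula: grounded, with uniform margins, and 2-increasing. -/
def IsCopula2 (C : ℝ → ℝ → ℝ) : Prop :=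
  (∀ u ∈ Set.Icc (0 : ℝ) 1, C u 0 = 0 ∧ C 0 u = 0 ∧ C u 1 = u ∧ C 1 u = u) ∧
  (∀ a b c d : ℝ, a ∈ Set.Icc (0 : ℝ) 1 → b ∈ Set.Icc (0 : ℝ) 1 →
    c ∈ Set.Icc (0 : ℝ) 1 → d ∈ Set.Icc (0 : ℝ) 1 → a ≤ b → c ≤ d →
    0 ≤ C b d - C a d - C b c + C a c)

/-- `G_k(u) = (𝒲_{|k}^{-1}(u) − δ_{k−1})/(δ_k − δ_{k−1})` on `(0,1)`, with
`G_k(0) = 0` and `G_k(1) = 1`. -/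
noncomputable def Gfun (W : ℝ → ℝ) (δ : ℕ → ℝ) (k : ℕ) (u : ℝ) : ℝ :=
  if u = 0 then 0 else if u = 1 then 1
  else (locInvI W (δ (k - 1)) (δ k) u - δ (k - 1)) / (δ k - δ (k - 1))

section Aux

variable {W : ℝ → ℝ} {a b : ℝ}

lemma locInvI_spec (hm : StrictMonoOn W (Set.Ioc a b))
    (himg : W '' Set.Ioc a b = Set.Ioc 0 1) {v : ℝ} (hv : v ∈ Set.Ioc (0:ℝ) 1) :
    locInvI W a b v ∈ Set.Ioc a b ∧ W (locInvI W a b v) = v := by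
  obtain ⟨x, hx, hWx⟩ : ∃ x ∈ Set.Ioc a b, W x = v := by
    rw [← himg] at hv; exact hv
  have hset : ({u | u ∈ Set.Ioc a b ∧ v ≤ W u} ∪ {b}) = Set.Icc x b := by
    ext y
    simp only [Set.mem_union, Set.mem_setOf_eq, Set.mem_singleton_iff, Set.mem_Icc]
    constructor
    · rintro (⟨hy, hvy⟩ | rfl)
      · exact ⟨(hm.le_iff_le hx hy).1 (hWx ▸ hvy), hy.2⟩
      · exact ⟨hx.2, le_rfl⟩
    · rintro ⟨hxy, hyb⟩
      left
      have hy : y ∈ Set.Ioc a b := ⟨hx.1.trans_le hxy, hyb⟩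
      exact ⟨hy, hWx ▸ (hm.le_iff_le hx hy).2 hxy⟩
  rw [locInvI, hset, csInf_Icc hx.2]
  exact ⟨hx, hWx⟩

lemma W_right_end (hab : a < b) (hm : StrictMonoOn W (Set.Ioc a b))
    (himg : W '' Set.Ioc a b = Set.Ioc 0 1) : W b = 1 := by
  have hb : b ∈ Set.Ioc a b := ⟨hab, le_rfl⟩
  have h1 : W b ∈ Set.Ioc (0:ℝ) 1 := himg ▸ Set.mem_image_of_mem W hb
  obtain ⟨x, hx, hWx⟩ : ∃ x ∈ Set.Ioc a b, W x = 1 := by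
    have : (1:ℝ) ∈ Set.Ioc (0:ℝ) 1 := ⟨one_pos, le_rfl⟩
    rw [← himg] at this; exact this
  have h2 : W x ≤ W b := hm.monotoneOn hx hb hx.2
  linarith [h1.2, hWx ▸ h2]

lemma locInvI_one (hab : a < b) (hm : StrictMonoOn W (Set.Ioc a b))
    (himg : W '' Set.Ioc a b = Set.Ioc 0 1) : locInvI W a b 1 = b := by
  obtain ⟨hmem, hW⟩ := locInvI_spec hm himg (v := 1) ⟨one_pos, le_rfl⟩
  exact hm.injOn hmem ⟨hab, le_rfl⟩ (hW.trans (W_right_end hab hm himg).symm)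

variable {δ : ℕ → ℝ} {k : ℕ}

lemma Gfun_of_mem (hab : δ (k-1) < δ k) (hm : StrictMonoOn W (Set.Ioc (δ (k-1)) (δ k)))
    (himg : W '' Set.Ioc (δ (k-1)) (δ k) = Set.Ioc 0 1) {u : ℝ} (hu : u ∈ Set.Ioc (0:ℝ) 1) :
    Gfun W δ k u = (locInvI W (δ (k-1)) (δ k) u - δ (k-1)) / (δ k - δ (k-1)) := by
  rcases eq_or_lt_of_le hu.2 with h1 | h1
  · rw [Gfun, if_neg (by linarith [hu.1] : u ≠ 0), if_pos h1, h1,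
      locInvI_one hab hm himg, div_self (by linarith)]
  · rw [Gfun, if_neg (by linarith [hu.1] : u ≠ 0), if_neg (by linarith : u ≠ 1)]

lemma Gfun_nonpos (hab : δ (k-1) < δ k)
    (himg : W '' Set.Ioc (δ (k-1)) (δ k) = Set.Ioc 0 1) {u : ℝ} (hu : u ≤ 0) :
    Gfun W δ k u = 0 := by
  rcases eq_or_lt_of_le hu with h0 | h0
  · rw [Gfun, if_pos h0]
  · rw [Gfun, if_neg (ne_of_lt h0), if_neg (by linarith : u ≠ 1)]
    have hset : ({x | x ∈ Set.Ioc (δ (k-1)) (δ k) ∧ u ≤ W x} ∪ {δ k})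
        = Set.Ioc (δ (k-1)) (δ k) := by
      ext y
      simp only [Set.mem_union, Set.mem_setOf_eq, Set.mem_singleton_iff]
      constructor
      · rintro (⟨hy, _⟩ | rfl)
        · exact hy
        · exact ⟨hab, le_rfl⟩
      · intro hy
        have : W y ∈ Set.Ioc (0:ℝ) 1 := himg ▸ Set.mem_image_of_mem W hy
        exact Or.inl ⟨hy, by linarith [this.1]⟩
    rw [locInvI, hset, csInf_Ioc hab, sub_self, zero_div]

lemma Gfun_ge_one (hab : δ (k-1) < δ k)
    (himg : W '' Set.Ioc (δ (k-1)) (δ k) = Set.Ioc 0 1) {u : ℝ} (hu : 1 ≤ u) :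
    Gfun W δ k u = 1 := by
  rcases eq_or_lt_of_le hu with h1 | h1
  · rw [Gfun, if_neg (by linarith : u ≠ 0), if_pos h1.symm]
  · rw [Gfun, if_neg (by linarith : u ≠ 0), if_neg (by linarith : u ≠ 1)]
    have hset : ({x | x ∈ Set.Ioc (δ (k-1)) (δ k) ∧ u ≤ W x} ∪ {δ k})
        = ({δ k} : Set ℝ) := by
      ext y
      simp only [Set.mem_union, Set.mem_setOf_eq, Set.mem_singleton_iff]
      constructor
      · rintro (⟨hy, hWy⟩ | rfl)
        · have : W y ∈ Set.Ioc (0:ℝ) 1 := himg ▸ Set.mem_image_of_mem W hy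
          linarith [this.2]
        · rfl
      · rintro rfl; exact Or.inr rfl
    rw [locInvI, hset, csInf_singleton, div_self (by linarith)]

lemma Gfun_nonneg (hab : δ (k-1) < δ k) (hm : StrictMonoOn W (Set.Ioc (δ (k-1)) (δ k)))
    (himg : W '' Set.Ioc (δ (k-1)) (δ k) = Set.Ioc 0 1) (u : ℝ) :
    0 ≤ Gfun W δ k u := by
  rcases le_or_gt u 0 with h | h
  · rw [Gfun_nonpos hab himg h]
  · rcases le_or_gt u 1 with h1 | h1
    · rw [Gfun_of_mem hab hm himg ⟨h, h1⟩]
      have := (locInvI_spec hm himg (v := u) ⟨h, h1⟩).1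
      exact div_nonneg (by linarith [this.1]) (by linarith)
    · rw [Gfun_ge_one hab himg h1.le]; norm_num

lemma Gfun_le_one (hab : δ (k-1) < δ k) (hm : StrictMonoOn W (Set.Ioc (δ (k-1)) (δ k)))
    (himg : W '' Set.Ioc (δ (k-1)) (δ k) = Set.Ioc 0 1) (u : ℝ) :
    Gfun W δ k u ≤ 1 := by
  rcases le_or_gt u 0 with h | h
  · rw [Gfun_nonpos hab himg h]; norm_num
  · rcases le_or_gt u 1 with h1 | h1
    · rw [Gfun_of_mem hab hm himg ⟨h, h1⟩]
      have := (locInvI_spec hm himg (v := u) ⟨h, h1⟩).1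
      rw [div_le_one (by linarith)]
      linarith [this.2]
    · rw [Gfun_ge_one hab himg h1.le]

lemma Gfun_pos (hab : δ (k-1) < δ k) (hm : StrictMonoOn W (Set.Ioc (δ (k-1)) (δ k)))
    (himg : W '' Set.Ioc (δ (k-1)) (δ k) = Set.Ioc 0 1) {u : ℝ} (hu : u ∈ Set.Ioc (0:ℝ) 1) :
    0 < Gfun W δ k u := by
  rw [Gfun_of_mem hab hm himg hu]
  have := (locInvI_spec hm himg hu).1
  apply div_pos (by linarith [this.1]) (by linarith)

lemma Gfun_lt_one (hab : δ (k-1) < δ k) (hm : StrictMonoOn W (Set.Ioc (δ (k-1)) (δ k)))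
    (himg : W '' Set.Ioc (δ (k-1)) (δ k) = Set.Ioc 0 1) {u : ℝ} (hu : u ∈ Set.Ioo (0:ℝ) 1) :
    Gfun W δ k u < 1 := by
  rw [Gfun_of_mem hab hm himg ⟨hu.1, hu.2.le⟩]
  obtain ⟨hmem, hW⟩ := locInvI_spec hm himg (v := u) ⟨hu.1, hu.2.le⟩
  have hblt : locInvI W (δ (k-1)) (δ k) u < δ k := by
    have := (hm.lt_iff_lt hmem ⟨hab, le_rfl⟩).1
    apply this
    rw [hW, W_right_end hab hm himg]
    exact hu.2
  rw [div_lt_one (by linarith)]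
  linarith

lemma Gfun_mono (hab : δ (k-1) < δ k) (hm : StrictMonoOn W (Set.Ioc (δ (k-1)) (δ k)))
    (himg : W '' Set.Ioc (δ (k-1)) (δ k) = Set.Ioc 0 1) :
    Monotone (Gfun W δ k) := by
  intro u v huv
  rcases le_or_gt u 0 with h | h
  · rw [Gfun_nonpos hab himg h]; exact Gfun_nonneg hab hm himg v
  · rcases le_or_gt 1 v with h1 | h1
    · rw [Gfun_ge_one hab himg h1]; exact Gfun_le_one hab hm himg u
    · have hu : u ∈ Set.Ioc (0:ℝ) 1 := ⟨h, by linarith⟩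
      have hv : v ∈ Set.Ioc (0:ℝ) 1 := ⟨by linarith, by linarith⟩
      rw [Gfun_of_mem hab hm himg hu, Gfun_of_mem hab hm himg hv]
      obtain ⟨hmu, hWu⟩ := locInvI_spec hm himg hu
      obtain ⟨hmv, hWv⟩ := locInvI_spec hm himg hv
      have : locInvI W (δ (k-1)) (δ k) u ≤ locInvI W (δ (k-1)) (δ k) v := by
        rw [← hm.le_iff_le hmu hmv, hWu, hWv] at *
        exact huv
      gcongr

lemma Gfun_continuous (hab : δ (k-1) < δ k) (hm : StrictMonoOn W (Set.Ioc (δ (k-1)) (δ k)))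
    (himg : W '' Set.Ioc (δ (k-1)) (δ k) = Set.Ioc 0 1) :
    Continuous (Gfun W δ k) := by
  set F : ℝ → ℝ := fun u => Gfun W δ k u + (max u 1 - 1) + min u 0 with hF
  have hFmono : Monotone F := by
    apply Monotone.add (Monotone.add (Gfun_mono hab hm himg) ?_) ?_
    · intro x y hxy; dsimp only; gcongr
    · intro x y hxy; dsimp only; gcongr
  have hFsurj : Function.Surjective F := by
    intro y
    rcases le_or_gt y 0 with h | h
    · refine ⟨y, ?_⟩
      simp only [hF]
      rw [Gfun_nonpos hab himg h, max_eq_right (by linarith), min_eq_left h]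
      ring
    · rcases le_or_gt 1 y with h1 | h1
      · refine ⟨y, ?_⟩
        simp only [hF]
        rw [Gfun_ge_one hab himg h1, max_eq_left h1, min_eq_right (by linarith)]
        ring
      · -- 0 < y < 1 : use surjectivity of Gfun
        set z := δ (k-1) + y * (δ k - δ (k-1)) with hz
        have hzmem : z ∈ Set.Ioc (δ (k-1)) (δ k) := by
          constructor
          · rw [hz]; nlinarith
          · rw [hz]; nlinarith
        set u := W z with hu
        have humem : u ∈ Set.Ioc (0:ℝ) 1 := himg ▸ Set.mem_image_of_mem W hzmem
        obtain ⟨hmem, hW⟩ := locInvI_spec hm himg humem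
        have hxz : locInvI W (δ (k-1)) (δ k) u = z := hm.injOn hmem hzmem (hW.trans rfl)
        refine ⟨u, ?_⟩
        simp only [hF]
        rw [Gfun_of_mem hab hm himg humem, hxz, max_eq_right humem.2,
          min_eq_right humem.1.le, hz]
        rw [add_sub_cancel_left, mul_div_assoc, div_self (by linarith), mul_one]
        ring
  have hFcont : Continuous F := hFmono.continuous_of_surjective hFsurj
  have hGF : Gfun W δ k = fun u => F (min (max u 0) 1) := by
    funext u
    rcases le_or_gt u 0 with h | h
    · rw [max_eq_right h, min_eq_left zero_le_one]; simp only [hF]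
      rw [Gfun_nonpos hab himg le_rfl, Gfun_nonpos hab himg h]
      norm_num
    · rcases le_or_gt 1 u with h1 | h1
      · rw [max_eq_left (by linarith), min_eq_right h1]; simp only [hF]
        rw [Gfun_ge_one hab himg le_rfl, Gfun_ge_one hab himg h1]
        norm_num
      · rw [max_eq_left h.le, min_eq_left h1.le]; simp only [hF]
        rw [max_eq_right h1.le, min_eq_right h.le]
        ring
  rw [hGF]
  exact hFcont.comp ((continuous_id.max continuous_const).min continuous_const)

end Aux

lemma stieltjes_setIntegral_deriv_le (f : StieltjesFunction ℝ) {g : ℝ → ℝ} (hfg : ⇑f = g)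
    {a b : ℝ} (hab : a ≤ b) :
    ∫ x in Set.Ioc a b, deriv g x ≤ g b - g a := by
  subst hfg
  have hd : ∀ᵐ x ∂volume, deriv f x = (f.measure.rnDeriv volume x).toReal := by
    filter_upwards [f.ae_hasDerivAt] with x hx using hx.deriv
  have hnn : 0 ≤ᵐ[volume.restrict (Set.Ioc a b)] deriv f :=
    ae_restrict_of_ae (hd.mono fun x hx => hx ▸ ENNReal.toReal_nonneg)
  rw [integral_eq_lintegral_of_nonneg_ae hnn (measurable_deriv f).aestronglyMeasurable]
  have h1 : ∫⁻ x in Set.Ioc a b, ENNReal.ofReal (deriv f x) ∂volume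
      = ∫⁻ x in Set.Ioc a b, f.measure.rnDeriv volume x ∂volume := by
    apply lintegral_congr_ae
    apply ae_restrict_of_ae
    filter_upwards [hd, f.measure.rnDeriv_lt_top volume] with x hx hlt
    rw [hx, ENNReal.ofReal_toReal hlt.ne]
  have h2 : ∫⁻ x in Set.Ioc a b, f.measure.rnDeriv volume x ∂volume
      ≤ f.measure (Set.Ioc a b) := by
    rw [← withDensity_apply _ measurableSet_Ioc]
    exact Measure.withDensity_rnDeriv_le f.measure volume _
  rw [h1]
  calc (∫⁻ x in Set.Ioc a b, f.measure.rnDeriv volume x ∂volume).toReal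
      ≤ (f.measure (Set.Ioc a b)).toReal := by
        apply ENNReal.toReal_mono ?_ h2
        rw [f.measure_Ioc]; exact ENNReal.ofReal_ne_top
    _ = f b - f a := by
        rw [f.measure_Ioc, ENNReal.toReal_ofReal (by linarith [f.mono hab])]

lemma delta_mono {K : ℕ} {δ : ℕ → ℝ} (hδ : ∀ k : ℕ, k < K → δ k < δ (k + 1)) :
    ∀ i j : ℕ, i ≤ j → j ≤ K → δ i ≤ δ j := by
  intro i j hij hjK
  induction j with
  | zero => cases Nat.le_zero.mp hij; exact le_rfl
  | succ n ih =>
    rcases Nat.eq_or_lt_of_le hij with h | h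
    · rw [h]
    · exact (ih (by omega) (by omega)).trans (hδ n (by omega)).le

lemma partition_Ioc {K : ℕ} {δ : ℕ → ℝ} (hδ : ∀ k : ℕ, k < K → δ k < δ (k + 1)) :
    ∀ n : ℕ, n ≤ K → (⋃ k ∈ Finset.Icc 1 n, Set.Ioc (δ (k-1)) (δ k)) = Set.Ioc (δ 0) (δ n) := by
  intro n
  induction n with
  | zero => intro _; simp [Finset.Icc_eq_empty_of_lt]
  | succ n ih =>
    intro hn
    have h1 : Finset.Icc 1 (n+1) = insert (n+1) (Finset.Icc 1 n) := by
      rw [← Finset.insert_Icc_right_eq_Icc_add_one (by omega)]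
    rw [h1, Finset.set_biUnion_insert, ih (by omega), Nat.add_sub_cancel,
      Set.union_comm, Set.Ioc_union_Ioc_eq_Ioc (delta_mono hδ 0 n (by omega) (by omega))
        (hδ n (by omega)).le]

lemma telescope_w {K : ℕ} (δ : ℕ → ℝ) :
    ∑ k ∈ Finset.Icc 1 K, (δ k - δ (k-1)) = δ K - δ 0 := by
  induction K with
  | zero => simp [Finset.Icc_eq_empty_of_lt]
  | succ n ih =>
    rw [Finset.sum_Icc_succ_top (by omega), ih, Nat.add_sub_cancel]
    ring


lemma sum_wG (W : ℝ → ℝ) (hWmeas : Measurable W)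
    (hWunif : Measure.map W unif01 = unif01)
    (K : ℕ) (δ : ℕ → ℝ) (hδ0 : δ 0 = 0) (hδK : δ K = 1)
    (hδ : ∀ k : ℕ, k < K → δ k < δ (k + 1))
    (hmono : ∀ k ∈ Finset.Icc 1 K, StrictMonoOn W (Set.Ioc (δ (k - 1)) (δ k)))
    (hsurj : ∀ k ∈ Finset.Icc 1 K, W '' Set.Ioc (δ (k - 1)) (δ k) = Set.Ioc (0 : ℝ) 1) :
    ∀ u ∈ Set.Icc (0:ℝ) 1, ∑ k ∈ Finset.Icc 1 K, (δ k - δ (k-1)) * Gfun W δ k u = u := by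
  have habk : ∀ k ∈ Finset.Icc 1 K, δ (k-1) < δ k := by
    intro k hk
    have hk' := Finset.mem_Icc.mp hk
    have h := hδ (k-1) (by omega)
    rwa [Nat.sub_add_cancel (by omega)] at h
  intro u hu
  rcases eq_or_lt_of_le hu.1 with h0 | h0
  · rw [← h0]
    simp [Gfun]
  have huIoc : u ∈ Set.Ioc (0:ℝ) 1 := ⟨h0, hu.2⟩
  set x : ℕ → ℝ := fun k => locInvI W (δ (k-1)) (δ k) u with hx
  have hxk : ∀ k ∈ Finset.Icc 1 K, x k ∈ Set.Ioc (δ (k-1)) (δ k) ∧ W (x k) = u :=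
    fun k hk => locInvI_spec (hmono k hk) (hsurj k hk) huIoc
  have key : ∑ k ∈ Finset.Icc 1 K, ENNReal.ofReal (x k - δ (k-1)) = ENNReal.ofReal u := by
    have h1 : (Measure.map W unif01) (Set.Iic u) = unif01 (Set.Iic u) := by rw [hWunif]
    rw [Measure.map_apply hWmeas measurableSet_Iic] at h1
    have h2 : unif01 (Set.Iic u) = ENNReal.ofReal u := by
      rw [unif01, Measure.restrict_apply measurableSet_Iic]
      have heq : Set.Iic u ∩ Set.Ioc 0 1 = Set.Ioc 0 u := by
        ext y; simp only [Set.mem_inter_iff, Set.mem_Iic, Set.mem_Ioc]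
        constructor
        · rintro ⟨ha, hb, hc⟩; exact ⟨hb, ha⟩
        · rintro ⟨ha, hb⟩; exact ⟨hb, ha, hb.trans hu.2⟩
      rw [heq, Real.volume_Ioc, sub_zero]
    have hpart := partition_Ioc hδ K le_rfl
    rw [hδ0, hδK] at hpart
    have hset : W ⁻¹' Set.Iic u ∩ Set.Ioc 0 1
        = ⋃ k ∈ Finset.Icc 1 K, Set.Ioc (δ (k-1)) (x k) := by
      ext y
      simp only [Set.mem_inter_iff, Set.mem_preimage, Set.mem_Iic, Set.mem_iUnion]
      constructor
      · rintro ⟨hWy, hy⟩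
        rw [← hpart] at hy
        simp only [Set.mem_iUnion] at hy
        obtain ⟨k, hk, hyk⟩ := hy
        refine ⟨k, hk, hyk.1, ?_⟩
        exact ((hmono k hk).le_iff_le hyk (hxk k hk).1).mp
          (by rw [(hxk k hk).2]; exact hWy)
      · rintro ⟨k, hk, hy⟩
        have hyk : y ∈ Set.Ioc (δ (k-1)) (δ k) := ⟨hy.1, hy.2.trans (hxk k hk).1.2⟩
        constructor
        · have := (hmono k hk).monotoneOn hyk (hxk k hk).1 hy.2
          rw [(hxk k hk).2] at this
          exact this
        · rw [← hpart]
          exact Set.mem_iUnion.mpr ⟨k, Set.mem_iUnion.mpr ⟨hk, hyk⟩⟩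
    rw [unif01, Measure.restrict_apply (hWmeas measurableSet_Iic), hset] at h1
    have hdisj : (↑(Finset.Icc 1 K) : Set ℕ).PairwiseDisjoint
        (fun k => Set.Ioc (δ (k-1)) (x k)) := by
      have base : ∀ i ∈ Finset.Icc 1 K, ∀ j ∈ Finset.Icc 1 K, i < j →
          Disjoint (Set.Ioc (δ (i-1)) (x i)) (Set.Ioc (δ (j-1)) (x j)) := by
        intro i hi j hj hij
        apply Set.disjoint_of_subset (Set.Ioc_subset_Ioc_right (hxk i hi).1.2)
          (Set.Ioc_subset_Ioc_right (hxk j hj).1.2)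
        rw [Set.Ioc_disjoint_Ioc]
        have hiK := Finset.mem_Icc.mp hi
        have hjK := Finset.mem_Icc.mp hj
        calc min (δ i) (δ j) ≤ δ i := min_le_left _ _
          _ ≤ δ (j-1) := delta_mono hδ i (j-1) (by omega) (by omega)
          _ ≤ max (δ (i-1)) (δ (j-1)) := le_max_right _ _
      intro i hi j hj hij
      simp only [Finset.coe_Icc, Set.mem_Icc] at hi hj
      have hi' : i ∈ Finset.Icc 1 K := Finset.mem_Icc.mpr hi
      have hj' : j ∈ Finset.Icc 1 K := Finset.mem_Icc.mpr hj
      rcases lt_or_gt_of_ne hij with h | h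
      · exact base i hi' j hj' h
      · exact (base j hj' i hi' h).symm
    rw [measure_biUnion_finset hdisj (fun k _ => measurableSet_Ioc)] at h1
    simp_rw [Real.volume_Ioc] at h1
    rw [unif01] at h2
    rw [h1]; exact h2
  have hnn : ∀ k ∈ Finset.Icc 1 K, 0 ≤ x k - δ (k-1) :=
    fun k hk => by linarith [(hxk k hk).1.1]
  rw [← ENNReal.ofReal_sum_of_nonneg hnn,
    ENNReal.ofReal_eq_ofReal_iff (Finset.sum_nonneg hnn) h0.le] at key
  have hterm : ∀ k ∈ Finset.Icc 1 K, (δ k - δ (k-1)) * Gfun W δ k u = x k - δ (k-1) := by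
    intro k hk
    rw [Gfun_of_mem (habk k hk) (hmono k hk) (hsurj k hk) huIoc, mul_comm,
      div_mul_cancel₀ _ (by linarith [habk k hk] : δ k - δ (k-1) ≠ 0)]
  rw [Finset.sum_congr rfl hterm, key]

lemma Gfun_FTC (W : ℝ → ℝ) (K : ℕ) (δ : ℕ → ℝ)
    (habk : ∀ k ∈ Finset.Icc 1 K, δ (k-1) < δ k)
    (hmono : ∀ k ∈ Finset.Icc 1 K, StrictMonoOn W (Set.Ioc (δ (k - 1)) (δ k)))
    (hsurj : ∀ k ∈ Finset.Icc 1 K, W '' Set.Ioc (δ (k - 1)) (δ k) = Set.Ioc (0 : ℝ) 1)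
    (hGdiff : ∀ k ∈ Finset.Icc 1 K,
      ∀ᵐ u ∂(volume.restrict (Set.Icc (0 : ℝ) 1)), DifferentiableAt ℝ (Gfun W δ k) u)
    (hsumid : ∀ u ∈ Set.Icc (0:ℝ) 1,
      ∑ k ∈ Finset.Icc 1 K, (δ k - δ (k-1)) * Gfun W δ k u = u) :
    (∀ k ∈ Finset.Icc 1 K, IntegrableOn (deriv (Gfun W δ k)) (Set.Icc 0 1) volume) ∧
    (∀ k ∈ Finset.Icc 1 K, ∀ t ∈ Set.Icc (0:ℝ) 1,
      Gfun W δ k t = ∫ x in Set.Ioc 0 t, deriv (Gfun W δ k) x) := by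
  set s := Finset.Icc 1 K with hs
  have hStex : ∀ k ∈ s, ∃ f : StieltjesFunction ℝ, ⇑f = Gfun W δ k := by
    intro k hk
    exact ⟨⟨Gfun W δ k, Gfun_mono (habk k hk) (hmono k hk) (hsurj k hk),
      fun x => (Gfun_continuous (habk k hk) (hmono k hk) (hsurj k hk)).continuousWithinAt⟩, rfl⟩
  -- nonnegativity of deriv, a.e.
  have hnnae : ∀ k ∈ s, ∀ᵐ x ∂volume, 0 ≤ deriv (Gfun W δ k) x := by
    intro k hk
    obtain ⟨f, hf⟩ := hStex k hk
    filter_upwards [f.ae_hasDerivAt] with x hx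
    rw [← hf, hx.deriv]
    exact ENNReal.toReal_nonneg
  have hnnall : ∀ᵐ x ∂volume, ∀ k ∈ s, 0 ≤ deriv (Gfun W δ k) x :=
    (ae_ball_iff s.countable_toSet).mpr hnnae
  -- a.e. the weighted sum of derivatives is 1
  have hdiffall : ∀ᵐ x ∂(volume.restrict (Set.Icc (0:ℝ) 1)),
      ∀ k ∈ s, DifferentiableAt ℝ (Gfun W δ k) x :=
    (ae_ball_iff s.countable_toSet).mpr hGdiff
  have hIoo : ∀ᵐ x ∂(volume.restrict (Set.Icc (0:ℝ) 1)), x ∈ Set.Ioo (0:ℝ) 1 := by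
    have h01 : volume ({0, 1} : Set ℝ) = 0 :=
      (Set.toFinite _).measure_zero volume
    have h1 : ∀ᵐ x ∂(volume.restrict (Set.Icc (0:ℝ) 1)), x ∉ ({0, 1} : Set ℝ) :=
      ae_restrict_of_ae (measure_eq_zero_iff_ae_notMem.mp h01)
    filter_upwards [h1, ae_restrict_mem measurableSet_Icc] with x hx1 hx2
    simp only [Set.mem_insert_iff, Set.mem_singleton_iff, not_or] at hx1
    exact ⟨lt_of_le_of_ne hx2.1 (Ne.symm hx1.1), lt_of_le_of_ne hx2.2 hx1.2⟩
  have hsum1 : ∀ᵐ x ∂(volume.restrict (Set.Icc (0:ℝ) 1)),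
      ∑ k ∈ s, (δ k - δ (k-1)) * deriv (Gfun W δ k) x = 1 := by
    filter_upwards [hdiffall, hIoo] with x hdiff hx
    have hloc : (fun u => ∑ k ∈ s, (δ k - δ (k-1)) * Gfun W δ k u) =ᶠ[nhds x] id := by
      filter_upwards [Ioo_mem_nhds hx.1 hx.2] with y hy
      exact hsumid y (Set.Ioo_subset_Icc_self hy)
    have hD : HasDerivAt (fun u => ∑ k ∈ s, (δ k - δ (k-1)) * Gfun W δ k u)
        (∑ k ∈ s, (δ k - δ (k-1)) * deriv (Gfun W δ k) x) x := by
      apply HasDerivAt.fun_sum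
      intro k hk
      exact ((hdiff k hk).hasDerivAt).const_mul _
    have := hD.deriv
    rw [hloc.deriv_eq] at this
    rw [← this, deriv_id]
  have hwpos : ∀ k ∈ s, (0:ℝ) < δ k - δ (k-1) := fun k hk => by linarith [habk k hk]
  -- boundedness a.e.
  have hbd : ∀ k ∈ s, ∀ᵐ x ∂(volume.restrict (Set.Icc (0:ℝ) 1)),
      deriv (Gfun W δ k) x ≤ (δ k - δ (k-1))⁻¹ := by
    intro k hk
    filter_upwards [hsum1, ae_restrict_of_ae hnnall] with x h1 h2
    have hle : (δ k - δ (k-1)) * deriv (Gfun W δ k) x ≤ 1 := by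
      rw [← h1]
      apply Finset.single_le_sum (f := fun j => (δ j - δ (j-1)) * deriv (Gfun W δ j) x) ?_ hk
      intro j hj
      exact mul_nonneg (hwpos j hj).le (h2 j hj)
    rw [inv_eq_one_div, le_div_iff₀ (hwpos k hk), mul_comm]
    exact hle
  -- integrability
  have hint : ∀ k ∈ s, IntegrableOn (deriv (Gfun W δ k)) (Set.Icc 0 1) volume := by
    intro k hk
    apply Integrable.mono' (g := fun _ => (δ k - δ (k-1))⁻¹)
      (integrableOn_const (C := (δ k - δ (k-1))⁻¹) measure_Icc_lt_top.ne)
      (measurable_deriv _).aestronglyMeasurable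
    filter_upwards [hbd k hk, ae_restrict_of_ae (hnnall)] with x h1 h2
    rw [Real.norm_eq_abs, abs_of_nonneg (h2 k hk)]
    exact h1
  refine ⟨hint, ?_⟩
  -- FTC equality
  intro k hk t ht
  set I : ℕ → ℝ := fun j => ∫ x in Set.Ioc 0 t, deriv (Gfun W δ j) x with hI
  have hIle : ∀ j ∈ s, I j ≤ Gfun W δ j t := by
    intro j hj
    obtain ⟨f, hf⟩ := hStex j hj
    have h := stieltjes_setIntegral_deriv_le f hf ht.1
    have hG0 : Gfun W δ j 0 = 0 := by rw [Gfun, if_pos rfl]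
    rw [hG0, sub_zero] at h
    exact h
  have hIocsub : Set.Ioc (0:ℝ) t ⊆ Set.Icc (0:ℝ) 1 := fun y hy =>
    ⟨hy.1.le, hy.2.trans ht.2⟩
  have hsums : ∑ j ∈ s, (δ j - δ (j-1)) * I j = t := by
    have h1 : ∀ j ∈ s, (δ j - δ (j-1)) * I j
        = ∫ x in Set.Ioc 0 t, (δ j - δ (j-1)) * deriv (Gfun W δ j) x := by
      intro j hj
      rw [hI]
      exact (MeasureTheory.integral_const_mul _ _).symm
    rw [Finset.sum_congr rfl h1, ← integral_finset_sum]
    · have h2 : ∀ᵐ x ∂(volume.restrict (Set.Ioc (0:ℝ) t)),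
          ∑ j ∈ s, (δ j - δ (j-1)) * deriv (Gfun W δ j) x = (fun _ => (1:ℝ)) x :=
        ae_restrict_of_ae_restrict_of_subset hIocsub hsum1
      rw [integral_congr_ae h2, setIntegral_const, measureReal_def, Real.volume_Ioc, sub_zero,
        ENNReal.toReal_ofReal ht.1, smul_eq_mul, mul_one]
    · intro j hj
      exact (((hint j hj).mono_set hIocsub)).const_mul _
  have hzero : ∑ j ∈ s, ((δ j - δ (j-1)) * Gfun W δ j t - (δ j - δ (j-1)) * I j) = 0 := by
    rw [Finset.sum_sub_distrib, hsumid t ht, hsums, sub_self]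
  have heach := (Finset.sum_eq_zero_iff_of_nonneg ?_).mp hzero k hk
  · have hw := hwpos k hk
    have : (δ k - δ (k-1)) * (Gfun W δ k t - I k) = 0 := by ring_nf; ring_nf at heach; linarith
    rcases mul_eq_zero.mp this with h | h
    · linarith
    · simp only [hI] at h ⊢
      linarith
  · intro j hj
    have := hIle j hj
    have hw := hwpos j hj
    nlinarith

lemma tendsto_div_of_FTC_zero {G : ℝ → ℝ} {g : ℝ}
    (hint : IntegrableOn (deriv G) (Set.Icc 0 1) volume)
    (hFTC : ∀ t ∈ Set.Icc (0:ℝ) 1, G t = ∫ x in Set.Ioc 0 t, deriv G x)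
    (hg : Tendsto (deriv G) (nhdsWithin 0 (Set.Ioi 0)) (nhds g)) :
    Tendsto (fun t => G t / t) (nhdsWithin 0 (Set.Ioi 0)) (nhds g) := by
  rw [Metric.tendsto_nhdsWithin_nhds] at hg ⊢
  intro ε hε
  obtain ⟨d, hd, hball⟩ := hg (ε/2) (by linarith)
  refine ⟨min d 1, by positivity, ?_⟩
  intro t htIoi hdist
  have ht0 : (0:ℝ) < t := htIoi
  rw [Real.dist_eq, sub_zero, abs_of_pos ht0] at hdist
  have htd : t < d := lt_of_lt_of_le hdist (min_le_left _ _)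
  have ht1 : t ≤ 1 := (lt_of_lt_of_le hdist (min_le_right _ _)).le
  have hGt := hFTC t ⟨ht0.le, ht1⟩
  have hIsub : Set.Ioc (0:ℝ) t ⊆ Set.Icc (0:ℝ) 1 := fun y hy => ⟨hy.1.le, hy.2.trans ht1⟩
  have hintt : IntegrableOn (deriv G) (Set.Ioc 0 t) volume := hint.mono_set hIsub
  have hkey : |G t - g * t| ≤ (ε/2) * t := by
    have h1 : G t - g * t = ∫ x in Set.Ioc 0 t, (deriv G x - g) := by
      rw [integral_sub hintt (integrableOn_const measure_Ioc_lt_top.ne),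
        setIntegral_const, measureReal_def, Real.volume_Ioc, sub_zero, ENNReal.toReal_ofReal ht0.le,
        smul_eq_mul, hGt, mul_comm]
    rw [h1, ← Real.norm_eq_abs]
    have h2 := norm_setIntegral_le_of_norm_le_const (C := ε/2) (μ := volume)
      (s := Set.Ioc (0:ℝ) t) (measure_Ioc_lt_top) (f := fun x => deriv G x - g) ?_
    · rw [measureReal_def, Real.volume_Ioc, sub_zero, ENNReal.toReal_ofReal ht0.le] at h2
      exact h2
    · intro x hx
      rw [Real.norm_eq_abs, ← Real.dist_eq]
      exact (hball (Set.mem_of_mem_of_subset hx Set.Ioc_subset_Ioi_self)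
        (by rw [Real.dist_eq, sub_zero, abs_of_pos hx.1]; linarith [hx.2])).le
  rw [Real.dist_eq]
  have heq : G t / t - g = (G t - g * t) / t := by field_simp
  rw [heq, abs_div, abs_of_pos ht0, div_lt_iff₀ ht0]
  calc |G t - g * t| ≤ (ε/2) * t := hkey
    _ < ε * t := by nlinarith

lemma tendsto_div_of_FTC_one {G : ℝ → ℝ} {g : ℝ}
    (hint : IntegrableOn (deriv G) (Set.Icc 0 1) volume)
    (hFTC : ∀ t ∈ Set.Icc (0:ℝ) 1, G t = ∫ x in Set.Ioc 0 t, deriv G x)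
    (hG1 : G 1 = 1)
    (hg : Tendsto (deriv G) (nhdsWithin 1 (Set.Iio 1)) (nhds g)) :
    Tendsto (fun t => (1 - G t) / (1 - t)) (nhdsWithin 1 (Set.Iio 1)) (nhds g) := by
  rw [Metric.tendsto_nhdsWithin_nhds] at hg ⊢
  intro ε hε
  obtain ⟨d, hd, hball⟩ := hg (ε/2) (by linarith)
  refine ⟨min d 1, by positivity, ?_⟩
  intro t htIio hdist
  have ht1 : t < 1 := htIio
  rw [Real.dist_eq, abs_of_neg (by linarith : t - 1 < 0)] at hdist
  have htd : 1 - t < d := by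
    have := lt_of_lt_of_le hdist (min_le_left _ _); linarith
  have ht0 : 0 < t := by
    have := lt_of_lt_of_le hdist (min_le_right _ _); linarith
  have hIsub : Set.Ioc t 1 ⊆ Set.Icc (0:ℝ) 1 := fun y hy => ⟨ht0.le.trans hy.1.le, hy.2⟩
  have hintt : IntegrableOn (deriv G) (Set.Ioc t 1) volume := hint.mono_set hIsub
  have hsplit : (1:ℝ) - G t = ∫ x in Set.Ioc t 1, deriv G x := by
    have h1 := hFTC 1 ⟨zero_le_one, le_rfl⟩
    have h2 := hFTC t ⟨ht0.le, ht1.le⟩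
    have h3 : ∫ x in Set.Ioc (0:ℝ) 1, deriv G x
        = (∫ x in Set.Ioc 0 t, deriv G x) + ∫ x in Set.Ioc t 1, deriv G x := by
      rw [← setIntegral_union (Set.Ioc_disjoint_Ioc_of_le le_rfl) measurableSet_Ioc
        (hint.mono_set (fun y hy => ⟨hy.1.le, hy.2.trans ht1.le⟩)) hintt,
        Set.Ioc_union_Ioc_eq_Ioc ht0.le ht1.le]
    rw [hG1] at h1
    linarith [h1, h2, h3]
  have hkey : |(1 - G t) - g * (1 - t)| ≤ (ε/2) * (1 - t) := by
    have h1 : (1 - G t) - g * (1 - t) = ∫ x in Set.Ioo t 1, (deriv G x - g) := by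
      rw [setIntegral_congr_set Ioo_ae_eq_Ioc]
      rw [integral_sub hintt (integrableOn_const measure_Ioc_lt_top.ne),
        setIntegral_const, measureReal_def, Real.volume_Ioc, ENNReal.toReal_ofReal (by linarith),
        smul_eq_mul, hsplit, mul_comm]
    rw [h1, ← Real.norm_eq_abs]
    have h2 := norm_setIntegral_le_of_norm_le_const (C := ε/2) (μ := volume)
      (s := Set.Ioo t 1) (measure_Ioo_lt_top) (f := fun x => deriv G x - g) ?_
    · rw [measureReal_def, Real.volume_Ioo, ENNReal.toReal_ofReal (by linarith)] at h2
      exact h2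
    · intro x hx
      rw [Real.norm_eq_abs, ← Real.dist_eq]
      refine (hball hx.2 ?_).le
      rw [Real.dist_eq, abs_of_neg (by linarith [hx.2] : x - 1 < 0)]
      linarith [hx.1]
  rw [Real.dist_eq]
  have h1t : (0:ℝ) < 1 - t := by linarith
  have heq : (1 - G t) / (1 - t) - g = ((1 - G t) - g * (1 - t)) / (1 - t) := by
    field_simp
  rw [heq, abs_div, abs_of_pos h1t, div_lt_iff₀ h1t]
  calc |(1 - G t) - g * (1 - t)| ≤ (ε/2) * (1 - t) := hkey
    _ < ε * (1 - t) := by nlinarith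


/-- tail dependence coefficients of the homogeneous W-transformed
ordinal sum `C_{S,𝒲}(u₁,u₂) = Σ_k (δ_k − δ_{k−1}) C_k(G_k(u₁), G_k(u₂))`:
`λ_l = Σ_k α_k λ_{l,k}` and `λ_u = Σ_k β_k λ_{u,k}` with
`α_k = (δ_k − δ_{k−1}) g_k(0+) ≥ 0`, `β_k = (δ_k − δ_{k−1}) g_k(1−) ≥ 0` and
`Σ_k α_k = Σ_k β_k = 1`. -/
theorem tail_dependence_of_w_transformed_ordinal_sum
    (W : ℝ → ℝ) (hWmeas : Measurable W)
    (hWmaps : Set.MapsTo W (Set.Icc 0 1) (Set.Icc 0 1))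
    -- `𝒲` is uniformity-preserving
    (hWunif : Measure.map W unif01 = unif01)
    -- change points `0 = δ_0 < δ_1 < ⋯ < δ_K = 1`
    (K : ℕ) (hK : 1 ≤ K) (δ : ℕ → ℝ)
    (hδ0 : δ 0 = 0) (hδK : δ K = 1)
    (hδ : ∀ k : ℕ, k < K → δ k < δ (k + 1))
    -- `𝒲` is piecewise surjective, continuous and strictly increasing
    (hmono : ∀ k ∈ Finset.Icc 1 K, StrictMonoOn W (Set.Ioc (δ (k - 1)) (δ k)))
    (hcont : ∀ k ∈ Finset.Icc 1 K, ContinuousOn W (Set.Ioc (δ (k - 1)) (δ k)))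
    (hsurj : ∀ k ∈ Finset.Icc 1 K,
      W '' Set.Ioc (δ (k - 1)) (δ k) = Set.Ioc (0 : ℝ) 1)
    -- the derivatives `g_k = G_k'` exist almost everywhere, with one-sided limits
    (hGdiff : ∀ k ∈ Finset.Icc 1 K,
      ∀ᵐ u ∂(volume.restrict (Set.Icc (0 : ℝ) 1)),
        DifferentiableAt ℝ (Gfun W δ k) u)
    (g0 g1 : ℕ → ℝ)
    (hg0 : ∀ k ∈ Finset.Icc 1 K,
      Tendsto (deriv (Gfun W δ k)) (nhdsWithin 0 (Set.Ioi 0)) (nhds (g0 k)))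
    (hg1 : ∀ k ∈ Finset.Icc 1 K,
      Tendsto (deriv (Gfun W δ k)) (nhdsWithin 1 (Set.Iio 1)) (nhds (g1 k)))
    -- the component copulas `C_k` with tail dependence coefficients
    (C : ℕ → ℝ → ℝ → ℝ) (hCk : ∀ k ∈ Finset.Icc 1 K, IsCopula2 (C k))
    (lamL lamU : ℕ → ℝ)
    (hlamL : ∀ k ∈ Finset.Icc 1 K,
      Tendsto (fun t => C k t t / t) (nhdsWithin 0 (Set.Ioi 0)) (nhds (lamL k)))
    (hlamU : ∀ k ∈ Finset.Icc 1 K,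
      Tendsto (fun t => (1 - 2 * t + C k t t) / (1 - t))
        (nhdsWithin 1 (Set.Iio 1)) (nhds (lamU k)))
    -- the homogeneous W-transformed ordinal sum
    (CSW : ℝ → ℝ → ℝ)
    (hCSW : ∀ u₁ u₂ : ℝ, CSW u₁ u₂
      = ∑ k ∈ Finset.Icc 1 K,
          (δ k - δ (k - 1)) * C k (Gfun W δ k u₁) (Gfun W δ k u₂)) :
    -- the weights are nonnegative and sum to one
    (∀ k ∈ Finset.Icc 1 K, 0 ≤ (δ k - δ (k - 1)) * g0 k) ∧
    (∀ k ∈ Finset.Icc 1 K, 0 ≤ (δ k - δ (k - 1)) * g1 k) ∧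
    (∑ k ∈ Finset.Icc 1 K, (δ k - δ (k - 1)) * g0 k) = 1 ∧
    (∑ k ∈ Finset.Icc 1 K, (δ k - δ (k - 1)) * g1 k) = 1 ∧
    -- the lower tail dependence coefficient `λ_l = Σ_k α_k λ_{l,k}`
    Tendsto (fun t => CSW t t / t) (nhdsWithin 0 (Set.Ioi 0))
      (nhds (∑ k ∈ Finset.Icc 1 K, ((δ k - δ (k - 1)) * g0 k) * lamL k)) ∧
    -- the upper tail dependence coefficient `λ_u = Σ_k β_k λ_{u,k}`
    Tendsto (fun t => (1 - 2 * t + CSW t t) / (1 - t)) (nhdsWithin 1 (Set.Iio 1))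
      (nhds (∑ k ∈ Finset.Icc 1 K, ((δ k - δ (k - 1)) * g1 k) * lamU k)) := by
  have habk : ∀ k ∈ Finset.Icc 1 K, δ (k-1) < δ k := by
    intro k hk
    have hk' := Finset.mem_Icc.mp hk
    have h := hδ (k-1) (by omega)
    rwa [Nat.sub_add_cancel (by omega)] at h
  have hsumid := sum_wG W hWmeas hWunif K δ hδ0 hδK hδ hmono hsurj
  obtain ⟨hint, hFTC⟩ := Gfun_FTC W K δ habk hmono hsurj hGdiff hsumid
  have hwpos : ∀ k ∈ Finset.Icc 1 K, (0:ℝ) < δ k - δ (k-1) :=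
    fun k hk => by linarith [habk k hk]
  have hsw : ∑ k ∈ Finset.Icc 1 K, (δ k - δ (k-1)) = 1 := by
    rw [telescope_w δ, hδ0, hδK, sub_zero]
  have hG1 : ∀ k : ℕ, Gfun W δ k 1 = 1 := by
    intro k; rw [Gfun]; norm_num
  -- one-sided limits of G k t / t and (1 - G k t)/(1 - t)
  have hG0lim : ∀ k ∈ Finset.Icc 1 K,
      Tendsto (fun t => Gfun W δ k t / t) (nhdsWithin 0 (Set.Ioi 0)) (nhds (g0 k)) :=
    fun k hk => tendsto_div_of_FTC_zero (hint k hk) (hFTC k hk) (hg0 k hk)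
  have hG1lim : ∀ k ∈ Finset.Icc 1 K,
      Tendsto (fun t => (1 - Gfun W δ k t) / (1 - t)) (nhdsWithin 1 (Set.Iio 1))
        (nhds (g1 k)) :=
    fun k hk => tendsto_div_of_FTC_one (hint k hk) (hFTC k hk) (hG1 k) (hg1 k hk)
  -- membership filters
  have hIoo0 : Set.Ioo (0:ℝ) 1 ∈ nhdsWithin (0:ℝ) (Set.Ioi 0) :=
    Ioo_mem_nhdsGT (by norm_num : (0:ℝ) < 1)
  have hIoo1 : Set.Ioo (0:ℝ) 1 ∈ nhdsWithin (1:ℝ) (Set.Iio 1) :=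
    Ioo_mem_nhdsLT (by norm_num : (0:ℝ) < 1)
  -- nonnegativity of the weights
  have hg0nn : ∀ k ∈ Finset.Icc 1 K, 0 ≤ g0 k := by
    intro k hk
    apply ge_of_tendsto (hG0lim k hk)
    filter_upwards [self_mem_nhdsWithin] with t ht
    exact div_nonneg (Gfun_nonneg (habk k hk) (hmono k hk) (hsurj k hk) t) (le_of_lt ht)
  have hg1nn : ∀ k ∈ Finset.Icc 1 K, 0 ≤ g1 k := by
    intro k hk
    apply ge_of_tendsto (hG1lim k hk)
    filter_upwards [self_mem_nhdsWithin] with t ht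
    exact div_nonneg (by linarith [Gfun_le_one (habk k hk) (hmono k hk) (hsurj k hk) t])
      (by rw [Set.mem_Iio] at ht; linarith)
  -- the weights sum to 1
  have hsum_g0 : ∑ k ∈ Finset.Icc 1 K, (δ k - δ (k-1)) * g0 k = 1 := by
    have hT : Tendsto (fun t => ∑ k ∈ Finset.Icc 1 K, (δ k - δ (k-1)) * (Gfun W δ k t / t))
        (nhdsWithin 0 (Set.Ioi 0))
        (nhds (∑ k ∈ Finset.Icc 1 K, (δ k - δ (k-1)) * g0 k)) :=
      tendsto_finset_sum _ (fun k hk => (hG0lim k hk).const_mul _)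
    have hEq : (fun t => ∑ k ∈ Finset.Icc 1 K, (δ k - δ (k-1)) * (Gfun W δ k t / t))
        =ᶠ[nhdsWithin 0 (Set.Ioi 0)] fun _ => (1:ℝ) := by
      filter_upwards [hIoo0] with t ht
      have h1 : ∀ k ∈ Finset.Icc 1 K,
          (δ k - δ (k-1)) * (Gfun W δ k t / t) = (δ k - δ (k-1)) * Gfun W δ k t / t :=
        fun k _ => (mul_div_assoc _ _ _).symm
      rw [Finset.sum_congr rfl h1, ← Finset.sum_div,
        hsumid t (Set.Ioo_subset_Icc_self ht), div_self (ne_of_gt ht.1)]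
    exact tendsto_nhds_unique (hT.congr' hEq) tendsto_const_nhds
  have hsum_g1 : ∑ k ∈ Finset.Icc 1 K, (δ k - δ (k-1)) * g1 k = 1 := by
    have hT : Tendsto
        (fun t => ∑ k ∈ Finset.Icc 1 K, (δ k - δ (k-1)) * ((1 - Gfun W δ k t) / (1 - t)))
        (nhdsWithin 1 (Set.Iio 1))
        (nhds (∑ k ∈ Finset.Icc 1 K, (δ k - δ (k-1)) * g1 k)) :=
      tendsto_finset_sum _ (fun k hk => (hG1lim k hk).const_mul _)
    have hEq : (fun t => ∑ k ∈ Finset.Icc 1 K, (δ k - δ (k-1)) * ((1 - Gfun W δ k t) / (1 - t)))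
        =ᶠ[nhdsWithin 1 (Set.Iio 1)] fun _ => (1:ℝ) := by
      filter_upwards [hIoo1] with t ht
      have h1t : (1:ℝ) - t ≠ 0 := by rw [sub_ne_zero]; exact (ne_of_gt ht.2)
      have h1 : ∀ k ∈ Finset.Icc 1 K,
          (δ k - δ (k-1)) * ((1 - Gfun W δ k t) / (1 - t))
            = ((δ k - δ (k-1)) - (δ k - δ (k-1)) * Gfun W δ k t) / (1 - t) := by
        intro k _; field_simp
      rw [Finset.sum_congr rfl h1, ← Finset.sum_div, Finset.sum_sub_distrib, hsw,
        hsumid t (Set.Ioo_subset_Icc_self ht), div_self h1t]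
    exact tendsto_nhds_unique (hT.congr' hEq) tendsto_const_nhds
  refine ⟨fun k hk => mul_nonneg (hwpos k hk).le (hg0nn k hk),
    fun k hk => mul_nonneg (hwpos k hk).le (hg1nn k hk), hsum_g0, hsum_g1, ?_, ?_⟩
  · -- lower tail
    have hGt0 : ∀ k ∈ Finset.Icc 1 K,
        Tendsto (Gfun W δ k) (nhdsWithin 0 (Set.Ioi 0)) (nhdsWithin 0 (Set.Ioi 0)) := by
      intro k hk
      rw [tendsto_nhdsWithin_iff]
      constructor
      · have h1 : Tendsto (fun t => (Gfun W δ k t / t) * t) (nhdsWithin 0 (Set.Ioi 0))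
            (nhds (g0 k * 0)) :=
          (hG0lim k hk).mul (tendsto_id.mono_left nhdsWithin_le_nhds)
        rw [mul_zero] at h1
        apply h1.congr'
        filter_upwards [self_mem_nhdsWithin] with t ht
        exact div_mul_cancel₀ _ (ne_of_gt ht)
      · filter_upwards [hIoo0] with t ht
        exact Gfun_pos (habk k hk) (hmono k hk) (hsurj k hk) ⟨ht.1, ht.2.le⟩
    have hCkL : ∀ k ∈ Finset.Icc 1 K,
        Tendsto (fun t => C k (Gfun W δ k t) (Gfun W δ k t) / Gfun W δ k t)
          (nhdsWithin 0 (Set.Ioi 0)) (nhds (lamL k)) :=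
      fun k hk => (hlamL k hk).comp (hGt0 k hk)
    have hT : Tendsto (fun t => ∑ k ∈ Finset.Icc 1 K, (δ k - δ (k-1)) *
          ((C k (Gfun W δ k t) (Gfun W δ k t) / Gfun W δ k t) * (Gfun W δ k t / t)))
        (nhdsWithin 0 (Set.Ioi 0))
        (nhds (∑ k ∈ Finset.Icc 1 K, (δ k - δ (k-1)) * (lamL k * g0 k))) :=
      tendsto_finset_sum _ (fun k hk => ((hCkL k hk).mul (hG0lim k hk)).const_mul _)
    have hval : ∑ k ∈ Finset.Icc 1 K, (δ k - δ (k-1)) * (lamL k * g0 k)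
        = ∑ k ∈ Finset.Icc 1 K, ((δ k - δ (k-1)) * g0 k) * lamL k :=
      Finset.sum_congr rfl (fun k _ => by ring)
    rw [hval] at hT
    apply hT.congr'
    filter_upwards [hIoo0] with t ht
    have h1 : ∀ k ∈ Finset.Icc 1 K, (δ k - δ (k-1)) *
        ((C k (Gfun W δ k t) (Gfun W δ k t) / Gfun W δ k t) * (Gfun W δ k t / t))
        = (δ k - δ (k-1)) * C k (Gfun W δ k t) (Gfun W δ k t) / t := by
      intro k hk
      have hGpos := Gfun_pos (habk k hk) (hmono k hk) (hsurj k hk)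
        (⟨ht.1, ht.2.le⟩ : t ∈ Set.Ioc (0:ℝ) 1)
      field_simp
    rw [Finset.sum_congr rfl h1, ← Finset.sum_div, ← hCSW]
  · -- upper tail
    have hGt1 : ∀ k ∈ Finset.Icc 1 K,
        Tendsto (Gfun W δ k) (nhdsWithin 1 (Set.Iio 1)) (nhdsWithin 1 (Set.Iio 1)) := by
      intro k hk
      rw [tendsto_nhdsWithin_iff]
      constructor
      · have h1mt : Tendsto (fun t => (1:ℝ) - t) (nhdsWithin 1 (Set.Iio 1)) (nhds 0) := by
          have := (tendsto_const_nhds (x := (1:ℝ))).sub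
            (tendsto_id.mono_left (nhdsWithin_le_nhds (a := (1:ℝ)) (s := Set.Iio 1)))
          simpa using this
        have h1 : Tendsto (fun t => 1 - ((1 - Gfun W δ k t) / (1 - t)) * (1 - t))
            (nhdsWithin 1 (Set.Iio 1)) (nhds (1 - g1 k * 0)) :=
          tendsto_const_nhds.sub ((hG1lim k hk).mul h1mt)
        rw [mul_zero, sub_zero] at h1
        apply h1.congr'
        filter_upwards [self_mem_nhdsWithin] with t ht
        rw [Set.mem_Iio] at ht
        rw [div_mul_cancel₀ _ (by rw [sub_ne_zero]; exact (ne_of_gt ht) : (1:ℝ) - t ≠ 0)]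
        ring
      · filter_upwards [hIoo1] with t ht
        exact Gfun_lt_one (habk k hk) (hmono k hk) (hsurj k hk) ht
    have hCkU : ∀ k ∈ Finset.Icc 1 K,
        Tendsto (fun t => (1 - 2 * Gfun W δ k t + C k (Gfun W δ k t) (Gfun W δ k t))
          / (1 - Gfun W δ k t)) (nhdsWithin 1 (Set.Iio 1)) (nhds (lamU k)) :=
      fun k hk => (hlamU k hk).comp (hGt1 k hk)
    have hT : Tendsto (fun t => ∑ k ∈ Finset.Icc 1 K, (δ k - δ (k-1)) *
          (((1 - 2 * Gfun W δ k t + C k (Gfun W δ k t) (Gfun W δ k t))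
              / (1 - Gfun W δ k t)) * ((1 - Gfun W δ k t) / (1 - t))
            + 2 * (1 - (1 - Gfun W δ k t) / (1 - t))))
        (nhdsWithin 1 (Set.Iio 1))
        (nhds (∑ k ∈ Finset.Icc 1 K, (δ k - δ (k-1)) *
          (lamU k * g1 k + 2 * (1 - g1 k)))) :=
      tendsto_finset_sum _ (fun k hk =>
        (((hCkU k hk).mul (hG1lim k hk)).add
          ((tendsto_const_nhds.sub (hG1lim k hk)).const_mul 2)).const_mul _)
    have hval : ∑ k ∈ Finset.Icc 1 K, (δ k - δ (k-1)) * (lamU k * g1 k + 2 * (1 - g1 k))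
        = ∑ k ∈ Finset.Icc 1 K, ((δ k - δ (k-1)) * g1 k) * lamU k := by
      have e1 : ∀ k ∈ Finset.Icc 1 K,
          (δ k - δ (k-1)) * (lamU k * g1 k + 2 * (1 - g1 k))
            = ((δ k - δ (k-1)) * g1 k) * lamU k
              + 2 * ((δ k - δ (k-1)) - (δ k - δ (k-1)) * g1 k) :=
        fun k _ => by ring
      rw [Finset.sum_congr rfl e1, Finset.sum_add_distrib, ← Finset.mul_sum,
        Finset.sum_sub_distrib, hsw, hsum_g1]
      ring
    rw [hval] at hT
    apply hT.congr'
    filter_upwards [hIoo1] with t ht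
    have h1t : (1:ℝ) - t ≠ 0 := by rw [sub_ne_zero]; exact (ne_of_gt ht.2)
    have h1 : ∀ k ∈ Finset.Icc 1 K, (δ k - δ (k-1)) *
        (((1 - 2 * Gfun W δ k t + C k (Gfun W δ k t) (Gfun W δ k t))
            / (1 - Gfun W δ k t)) * ((1 - Gfun W δ k t) / (1 - t))
          + 2 * (1 - (1 - Gfun W δ k t) / (1 - t)))
        = ((δ k - δ (k-1)) * (1 - 2 * t + C k (Gfun W δ k t) (Gfun W δ k t))) / (1 - t) := by
      intro k hk
      have hGlt := Gfun_lt_one (habk k hk) (hmono k hk) (hsurj k hk) ht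
      have hG1t : (1:ℝ) - Gfun W δ k t ≠ 0 := by rw [sub_ne_zero]; exact (ne_of_gt hGlt)
      field_simp
      ring
    have h2 : ∑ k ∈ Finset.Icc 1 K,
        (δ k - δ (k-1)) * (1 - 2 * t + C k (Gfun W δ k t) (Gfun W δ k t))
        = (1 - 2 * t) + CSW t t := by
      have e1 : ∀ k ∈ Finset.Icc 1 K,
          (δ k - δ (k-1)) * (1 - 2 * t + C k (Gfun W δ k t) (Gfun W δ k t))
            = (δ k - δ (k-1)) * (1 - 2 * t)
              + (δ k - δ (k-1)) * C k (Gfun W δ k t) (Gfun W δ k t) :=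
        fun k _ => by ring
      rw [Finset.sum_congr rfl e1, Finset.sum_add_distrib, ← Finset.sum_mul, hsw,
        one_mul, hCSW]
    rw [Finset.sum_congr rfl h1, ← Finset.sum_div, h2]
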